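/- Let S be a set of transpositions in S_n and let G be the graph on [n] whose edges are the pairs {i,j} with T_{ij} ∈ S. Two permutations σ, τ ∈ S_n are equivalent under the equivalence generated by left-composition with elements of S if and only if σ(A) = τ(A) for every connected component A of G. Equivalently, the labeling map K ↦ (a_1,...,a_n), where a_i = min_{σ∈K} σ^{-1}(i), is injective on equivalence classes. -/

import Mathlib

open Matrix

variable {n : ℕ}

/-- Vertex-connectivity graph `G_v(M)`: edge between distinct `i, j` iff `M i j = 1` or `M j i = 1`. -/
def Gv (M : Matrix (Fin n) (Fin n) (ZMod 2)) : SimpleGraph (Fin n) :=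
  SimpleGraph.fromRel (fun i j => M i j = 1)

/-- `v(M)`: number of connected components of `G_v(M)`. -/
noncomputable def vcomp (M : Matrix (Fin n) (Fin n) (ZMod 2)) : ℕ :=
  Nat.card (Gv M).ConnectedComponent

/-- Edge-connectivity graph `G_e(M)`: `inl i` is row `R_i`, `inr j` is column `C_j`;
edge `R_i – C_j` iff `M i j = 1`. -/
def Ge (M : Matrix (Fin n) (Fin n) (ZMod 2)) : SimpleGraph (Fin n ⊕ Fin n) :=
  SimpleGraph.fromRel (fun x y => ∃ i j, x = Sum.inl i ∧ y = Sum.inr j ∧ M i j = 1)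

/-- `e(M)`: number of connected components of `G_e(M)`. -/
noncomputable def ecomp (M : Matrix (Fin n) (Fin n) (ZMod 2)) : ℕ :=
  Nat.card (Ge M).ConnectedComponent

/-- The result of the CNOT operation `CNOT(i,j)`: add row `i` of `M` to row `j` over `F_2`. -/
def cnotStep (M : Matrix (Fin n) (Fin n) (ZMod 2)) (i j : Fin n) :
    Matrix (Fin n) (Fin n) (ZMod 2) :=
  M.updateRow j (M i + M j)

/-- A river of `M`: a permutation `σ` with `M k (σ k) = 1` for all `k`. -/
def IsRiver (M : Matrix (Fin n) (Fin n) (ZMod 2)) (σ : Equiv.Perm (Fin n)) : Prop :=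
  ∀ k, M k (σ k) = 1

instance (M : Matrix (Fin n) (Fin n) (ZMod 2)) : DecidablePred (IsRiver M) := fun σ => by
  unfold IsRiver; exact Fintype.decidableForallFintype

/-- A CNOT gate matrix: `I + E_{j,i}` for `i ≠ j` (left-multiplication adds row `i` to row `j`). -/
def IsCNOT (E : Matrix (Fin n) (Fin n) (ZMod 2)) : Prop :=
  ∃ i j : Fin n, i ≠ j ∧ E = 1 + Matrix.single j i 1

/-- `s(M)`: the minimum number of CNOT gate matrices whose product is `M`. -/
noncomputable def synthSize (M : Matrix (Fin n) (Fin n) (ZMod 2)) : ℕ :=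
  sInf {k | ∃ L : List (Matrix (Fin n) (Fin n) (ZMod 2)),
    L.length = k ∧ (∀ E ∈ L, IsCNOT E) ∧ L.prod = M}

/-- The permutation matrix `P_σ` with `(P_σ)_{i, σ(i)} = 1`. -/
def Pmat (σ : Equiv.Perm (Fin n)) : Matrix (Fin n) (Fin n) (ZMod 2) :=
  Matrix.of fun i j => if σ i = j then 1 else 0

/-- Two permutations are equivalent under left-composition by transpositions in `S` iff
the preimages of every connected component of the associated graph `G` agree; hence the
labeling map is injective on equivalence classes. -/
theorem stmt8 (n : ℕ) (S : Set (Equiv.Perm (Fin n)))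
    (hS : ∀ τ ∈ S, ∃ a b, a ≠ b ∧ τ = Equiv.swap a b)
    (G : SimpleGraph (Fin n))
    (hG : ∀ a b, G.Adj a b ↔ a ≠ b ∧ Equiv.swap a b ∈ S)
    (σ τ : Equiv.Perm (Fin n)) :
    Relation.ReflTransGen (fun x y => ∃ t ∈ S, y = t * x) σ τ ↔
      ∀ A : Set (Fin n), (∃ v, A = {i | G.Reachable v i}) → ⇑σ⁻¹ '' A = ⇑τ⁻¹ '' A := by
  classical
  -- swaps of reachable pairs fix component sets
  have hcomp : ∀ a b : Fin n, G.Reachable a b → ∀ A : Set (Fin n),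
      (∃ v, A = {i | G.Reachable v i}) → ⇑(Equiv.swap a b) ⁻¹' A = A := by
    rintro a b hab A ⟨v, rfl⟩
    have hmem : G.Reachable v a ↔ G.Reachable v b :=
      ⟨fun h => h.trans hab, fun h => h.trans hab.symm⟩
    ext i
    rcases eq_or_ne i a with rfl | hia
    · simp only [Set.mem_preimage, Equiv.swap_apply_left, Set.mem_setOf_eq]
      exact hmem.symm
    rcases eq_or_ne i b with rfl | hib
    · simp only [Set.mem_preimage, Equiv.swap_apply_right, Set.mem_setOf_eq]
      exact hmem
    · rw [Set.mem_preimage, Equiv.swap_apply_of_ne_of_ne hia hib]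
  have himg : ∀ a b : Fin n, G.Reachable a b → ∀ A : Set (Fin n),
      (∃ v, A = {i | G.Reachable v i}) → ⇑(Equiv.swap a b) '' A = A := by
    intro a b hab A hA
    rw [Equiv.image_eq_preimage_symm, Equiv.symm_swap]
    exact hcomp a b hab A hA
  -- a swap of a reachable pair is achievable by a chain of steps
  have hstep : ∀ a b : Fin n, G.Reachable a b → ∀ x : Equiv.Perm (Fin n),
      Relation.ReflTransGen (fun x y => ∃ t ∈ S, y = t * x) x (Equiv.swap a b * x) := by
    intro a b hab
    rw [SimpleGraph.reachable_iff_reflTransGen] at hab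
    induction hab with
    | refl =>
      intro x
      simp only [Equiv.swap_self, ← Equiv.Perm.one_def, one_mul]
      exact Relation.ReflTransGen.refl
    | @tail b c h1 h2 ih =>
      obtain ⟨hbc, hmem⟩ := (hG b c).mp h2
      intro x
      rcases eq_or_ne a c with rfl | hac
      · simp only [Equiv.swap_self, ← Equiv.Perm.one_def, one_mul]
        exact Relation.ReflTransGen.refl
      rcases eq_or_ne a b with rfl | hab'
      · exact Relation.ReflTransGen.single ⟨Equiv.swap a c, hmem, rfl⟩
      · have key : Equiv.swap a c = Equiv.swap b c * Equiv.swap a b * Equiv.swap b c := by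
          have h1 : Equiv.swap b c a = a := Equiv.swap_apply_of_ne_of_ne hab' hac
          have h2 : Equiv.swap b c b = c := Equiv.swap_apply_left b c
          calc Equiv.swap a c = Equiv.swap (Equiv.swap b c a) (Equiv.swap b c b) := by
                rw [h1, h2]
            _ = Equiv.swap b c * Equiv.swap a b * (Equiv.swap b c)⁻¹ :=
                Equiv.swap_apply_apply _ a b
            _ = Equiv.swap b c * Equiv.swap a b * Equiv.swap b c := by
                rw [Equiv.swap_inv]
        have c1 : Relation.ReflTransGen (fun x y => ∃ t ∈ S, y = t * x) x
            (Equiv.swap b c * x) := Relation.ReflTransGen.single ⟨_, hmem, rfl⟩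
        have c2 := ih (Equiv.swap b c * x)
        have c3 : Relation.ReflTransGen (fun x y => ∃ t ∈ S, y = t * x)
            (Equiv.swap a b * (Equiv.swap b c * x))
            (Equiv.swap b c * (Equiv.swap a b * (Equiv.swap b c * x))) :=
          Relation.ReflTransGen.single ⟨_, hmem, rfl⟩
        have := (c1.trans c2).trans c3
        rw [key]
        simpa [mul_assoc] using this
  constructor
  · intro h
    induction h with
    | refl => intro A _; rfl
    | @tail y z h1 h2 ih =>
      intro A hA
      obtain ⟨t, htS, rfl⟩ := h2
      obtain ⟨a, b, hab, rfl⟩ := hS t htS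
      have hadj : G.Adj a b := (hG a b).mpr ⟨hab, htS⟩
      rw [ih A hA, _root_.mul_inv_rev, Equiv.swap_inv, Equiv.Perm.coe_mul, Set.image_comp,
        himg a b hadj.reachable A hA]
  · -- converse: induction on number of disagreements
    have main : ∀ m : ℕ, ∀ x : Equiv.Perm (Fin n),
        (Finset.univ.filter fun k => x k ≠ τ k).card ≤ m →
        (∀ A : Set (Fin n), (∃ v, A = {i | G.Reachable v i}) → ⇑x⁻¹ '' A = ⇑τ⁻¹ '' A) →
        Relation.ReflTransGen (fun x y => ∃ t ∈ S, y = t * x) x τ := by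
      intro m
      induction m with
      | zero =>
        intro x hcard _
        have : x = τ := by
          apply Equiv.ext
          intro k
          by_contra hk
          have : k ∈ Finset.univ.filter fun k => x k ≠ τ k := by
            simp [hk]
          simp [Finset.card_eq_zero.mp (Nat.le_zero.mp hcard)] at this
        rw [this]
      | succ m ih =>
        intro x hcard hA
        by_cases hxτ : x = τ
        · rw [hxτ]
        · obtain ⟨k, hk⟩ : ∃ k, x k ≠ τ k := by
            by_contra h
            push_neg at h
            exact hxτ (Equiv.ext h)
          set a := x k with ha
          set b := τ k with hb
          -- a and b are in the same component
          have hr : G.Reachable a b := by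
            have hAa := hA {i | G.Reachable a i} ⟨a, rfl⟩
            have hkmem : k ∈ ⇑x⁻¹ '' {i | G.Reachable a i} :=
              ⟨a, SimpleGraph.Reachable.refl a, by simp [ha]⟩
            rw [hAa] at hkmem
            obtain ⟨c, hc, hck⟩ := hkmem
            have : c = b := by
              rw [hb, ← hck, ← Equiv.Perm.mul_apply, mul_inv_cancel, Equiv.Perm.one_apply]
            rwa [this] at hc
          have hchain := hstep a b hr x
          refine hchain.trans (ih (Equiv.swap a b * x) ?_ ?_)
          · -- cardinality decreases
            have hsub : (Finset.univ.filter fun j => (Equiv.swap a b * x) j ≠ τ j) ⊆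
                (Finset.univ.filter fun j => x j ≠ τ j).erase k := by
              intro j hj
              simp only [Finset.mem_filter, Finset.mem_univ, true_and] at hj
              rw [Finset.mem_erase, Finset.mem_filter]
              constructor
              · rintro rfl
                apply hj
                simp [Equiv.Perm.mul_apply, ← ha, ← hb]
              · refine ⟨Finset.mem_univ j, fun hxj => hj ?_⟩
                rw [Equiv.Perm.mul_apply, hxj]
                rcases eq_or_ne (τ j) a with hja | hja
                · exfalso
                  have : j = k := x.injective (by rw [← hxj] at hja; rw [hja, ← ha])
                  rw [this] at hxj; exact hk hxj
                rcases eq_or_ne (τ j) b with hjb | hjb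
                · exfalso
                  have : j = k := τ.injective (by rw [hjb, hb])
                  rw [this] at hxj; exact hk hxj
                · exact Equiv.swap_apply_of_ne_of_ne hja hjb
            have hkmem : k ∈ Finset.univ.filter fun j => x j ≠ τ j := by simp; exact hk
            have := Finset.card_le_card hsub
            rw [Finset.card_erase_of_mem hkmem] at this
            omega
          · intro A hcA
            rw [_root_.mul_inv_rev, Equiv.swap_inv, Equiv.Perm.coe_mul, Set.image_comp,
              himg a b hr A hcA]
            exact hA A hcA
    intro hA
    exact main _ σ le_rfl hA
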